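/- Encode an abstract G-stair as a pair (ℓ, w) ∈ (ℤ/kℤ) × {right, down}^{k−1}. The number of sequences (Γ₁, …, Γ_k) of abstract G-stairs such that Γ₁ has height k (i.e. its step word consists only of down steps) and, for each 1 ≤ j ≤ k−1, Γ_{j+1} is the G-substair at some position m ∈ {1, …, k} with horizontal left cut of the decreasing linking stair of Γ_j, is exactly k!. (Such sequences are exactly the ordered lists of toric G-constellations of the chambers C ⊂ Θ^gen; this is the combinatorial content of the Theorem that for G ⊂ SL(2,ℂ) cyclic of order k the space of generic stability conditions is the disjoint union of k! chambers.) -/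

import Mathlib

/-- A step of a stair: a right step `+(1,0)` or a down step `+(0,-1)`. -/
inductive Step
  | right
  | down
deriving DecidableEq, BEq

/-- The step word of the decreasing linking stair of a `G`-stair with step word `w`:
`L = w ++ [right] ++ w`. -/
def dls (w : List Step) : List Step := w ++ [Step.right] ++ w

/-- The `G`-substair at position `m` of the decreasing linking stair of the abstract `G`-stair
`Γ = (ℓ, w)`: it has first-box label `ℓ + m` and step word `(L_m, …, L_{m+k-2})` where
`L = dls w`. -/
def substairAt (k : ℕ) (Γ : ZMod k × List Step) (m : ℕ) : ZMod k × List Step :=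
  (Γ.1 + (m : ZMod k), ((dls Γ.2).drop m).take (k - 1))

instance : LawfulBEq Step where
  eq_of_beq {a b} h := by cases a <;> cases b <;> first | rfl | exact absurd h (by decide)
  rfl {a} := by cases a <;> rfl

/-- One admissible move. -/
def Valid (k : ℕ) (Γ Γ' : ZMod k × List Step) : Prop :=
  ∃ m : ℕ, 1 ≤ m ∧ m ≤ k ∧
    (dls Γ.2)[m - 1]? = some Step.down ∧ Γ' = substairAt k Γ m

/-- Sequences of `n+1` stairs starting at `Γ₀` following admissible moves. -/
def SeqSet (k n : ℕ) (Γ₀ : ZMod k × List Step) : Type :=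
  {f : Fin (n + 1) → ZMod k × List Step // f 0 = Γ₀ ∧
    ∀ j : ℕ, ∀ hj : j + 1 < n + 1,
      Valid k (f ⟨j, Nat.lt_of_succ_lt hj⟩) (f ⟨j + 1, hj⟩)}

lemma dls_getElem_of_lt {w : List Step} {i : ℕ} (hi : i < w.length) :
    (dls w)[i]? = w[i]? := by
  unfold dls
  rw [List.getElem?_append_left (by simp; omega), List.getElem?_append_left hi]

lemma dls_getElem_mid (w : List Step) :
    (dls w)[w.length]? = some Step.right := by
  unfold dls
  rw [List.getElem?_append_left (by simp), List.getElem?_append_right (le_refl _)]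
  simp

lemma valid_index {k : ℕ} {w : List Step} {m : ℕ} (hl : w.length + 1 = k)
    (h1 : 1 ≤ m) (hmk : m ≤ k) (hdown : (dls w)[m - 1]? = some Step.down) :
    m - 1 < w.length ∧ w[m - 1]? = some Step.down := by
  rcases lt_or_ge (m - 1) w.length with h | h
  · exact ⟨h, by rwa [dls_getElem_of_lt h] at hdown⟩
  · have : m - 1 = w.length := by omega
    rw [this, dls_getElem_mid] at hdown
    simp at hdown

lemma dls_window {w : List Step} {i : ℕ} (hi : i < w.length) :
    ((dls w).drop (i + 1)).take w.length =
      w.drop (i + 1) ++ Step.right :: w.take i := by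
  unfold dls
  rw [List.drop_append, List.drop_append]
  have h1 : i + 1 - w.length = 0 := by omega
  have h2 : i + 1 - (w ++ [Step.right]).length = 0 := by simp; omega
  rw [h1, h2]
  simp only [List.drop_zero]
  rw [List.take_append, List.take_append]
  have h3 : (w.drop (i + 1)).length = w.length - (i + 1) := by simp
  have h4 : w.length - (w.drop (i + 1)).length = i + 1 := by rw [h3]; omega
  rw [h4, List.take_of_length_le (by rw [h3]; omega),
    List.take_of_length_le (by simp : ([Step.right]).length ≤ i + 1)]
  have h5 : w.length - (w.drop (i + 1) ++ [Step.right]).length = i := by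
    simp; omega
  rw [h5]
  simp

lemma count_split {w : List Step} {i : ℕ} (hi : i < w.length)
    (hd : w[i] = Step.down) :
    w.count Step.down =
      (w.take i).count Step.down + (w.drop (i + 1)).count Step.down + 1 := by
  conv_lhs => rw [← List.take_append_drop i w]
  rw [List.count_append, List.drop_eq_getElem_cons hi, hd, List.count_cons]
  simp [List.count_append]
  omega

lemma valid_step {k : ℕ} {Γ Γ' : ZMod k × List Step} (hl : Γ.2.length + 1 = k)
    (hv : Valid k Γ Γ') :
    Γ'.2.length + 1 = k ∧ Γ'.2.count Step.down + 1 = Γ.2.count Step.down := by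
  obtain ⟨m, h1, hmk, hdown, heq⟩ := hv
  obtain ⟨hilt, hw⟩ := valid_index hl h1 hmk hdown
  set w := Γ.2 with hwdef
  set i := m - 1 with hidef
  have hm : m = i + 1 := by omega
  have hk1 : k - 1 = w.length := by omega
  have hgw : w[i] = Step.down := by
    obtain ⟨_, h⟩ := List.getElem?_eq_some_iff.mp hw
    exact h
  have hΓ' : Γ'.2 = w.drop (i + 1) ++ Step.right :: w.take i := by
    rw [heq]
    show ((dls w).drop m).take (k-1) = _
    rw [hm, hk1, dls_window hilt]
  constructor
  · rw [hΓ']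
    simp
    omega
  · rw [hΓ', List.count_append, List.count_cons, count_split hilt hgw]
    simp
    omega

/-- index-filter card equals count -/
lemma filter_get_card (l : List Step) (a : Step) :
    (Finset.univ.filter fun i : Fin l.length => l.get i = a).card = l.count a := by
  induction l with
  | nil => simp
  | cons b t ih =>
    rw [List.count_cons, ← ih, Finset.card_filter, Finset.card_filter]
    simp only [List.length_cons]
    rw [Fin.sum_univ_succ]
    simp only [List.get_eq_getElem, List.getElem_cons_zero, List.getElem_cons_succ,
      Fin.val_succ, beq_iff_eq]
    rw [add_comm]
    simp
    by_cases h : b = a <;> simp [h]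

/-- The set of admissible successors of `Γ` is in bijection with the set of
down-step positions of its word. -/
lemma valid_equiv_downs (k : ℕ) (Γ : ZMod k × List Step) (hl : Γ.2.length + 1 = k) :
    Nonempty ({x // Valid k Γ x} ≃ Fin (Γ.2.count Step.down)) := by
  have hcard : Fintype.card {i : Fin Γ.2.length // Γ.2.get i = Step.down} =
      Γ.2.count Step.down := by
    rw [Fintype.card_subtype]; exact filter_get_card _ _
  suffices h : Nonempty ({x // Valid k Γ x} ≃
      {i : Fin Γ.2.length // Γ.2.get i = Step.down}) by
    obtain ⟨e⟩ := h
    exact ⟨e.trans (Fintype.equivFinOfCardEq hcard)⟩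
  refine ⟨(Equiv.ofBijective
    (fun i : {i : Fin Γ.2.length // Γ.2.get i = Step.down} =>
      (⟨substairAt k Γ (i.1.1 + 1),
        ⟨i.1.1 + 1, by omega, by have := i.1.2; omega, by
          have hi : (i.1 : ℕ) < Γ.2.length := i.1.2
          have h' : (i.1.1 + 1) - 1 = i.1.1 := by omega
          rw [h', dls_getElem_of_lt hi, List.getElem?_eq_some_iff]
          exact ⟨hi, i.2⟩, rfl⟩⟩ : {x // Valid k Γ x})) ⟨?_, ?_⟩).symm⟩
  · rintro ⟨⟨i, hi⟩, hdi⟩ ⟨⟨j, hj⟩, hdj⟩ hij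
    have h1 : Γ.1 + ((i + 1 : ℕ) : ZMod k) = Γ.1 + ((j + 1 : ℕ) : ZMod k) := by
      have := congrArg (fun x => x.1.1) hij
      simpa [substairAt] using this
    have h2 : ((i + 1 : ℕ) : ZMod k) = ((j + 1 : ℕ) : ZMod k) := add_left_cancel h1
    rw [ZMod.natCast_eq_natCast_iff] at h2
    have h3 : (i + 1) % k = (j + 1) % k := h2
    rw [Nat.mod_eq_of_lt (by omega), Nat.mod_eq_of_lt (by omega)] at h3
    have hij' : i = j := by omega
    subst hij'
    rfl
  · rintro ⟨Γ', m, h1, hmk, hdown, heq⟩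
    obtain ⟨hilt, hw⟩ := valid_index hl h1 hmk hdown
    obtain ⟨hlt', hgw⟩ := List.getElem?_eq_some_iff.mp hw
    refine ⟨⟨⟨m - 1, hilt⟩, by simpa using hgw⟩, ?_⟩
    apply Subtype.ext
    show substairAt k Γ ((m - 1) + 1) = Γ'
    rw [heq]
    congr 1
    omega


instance seqSetUnique (k : ℕ) (Γ : ZMod k × List Step) : Unique (SeqSet k 0 Γ) where
  default := ⟨fun _ => Γ, rfl, fun j hj => absurd hj (by omega)⟩
  uniq f := Subtype.ext (funext fun i => by
    have h1 : i = 0 := by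
      have := i.isLt
      apply Fin.ext
      simp
    rw [h1, f.2.1])

lemma seqset_heq {k n : ℕ} {c₁ c₂ : ZMod k × List Step} (h : c₁ = c₂)
    (f₁ : SeqSet k n c₁) (f₂ : SeqSet k n c₂) (hf : f₁.1 = f₂.1) : HEq f₁ f₂ := by
  subst h
  exact heq_of_eq (Subtype.ext hf)

/-- Splitting off the first move of a sequence. -/
def seqSuccEquiv (k n : ℕ) (Γ : ZMod k × List Step) :
    SeqSet k (n + 1) Γ ≃ Σ Γ' : {x // Valid k Γ x}, SeqSet k n Γ'.1 where
  toFun f := ⟨⟨f.1 (Fin.succ 0), by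
      have h := f.2.2 0 (by omega)
      have h0 : (⟨0, by omega⟩ : Fin (n + 2)) = 0 := by
        apply Fin.ext; simp
      rw [h0, f.2.1] at h
      exact h⟩,
    ⟨fun i => f.1 i.succ, rfl, fun j hj => f.2.2 (j + 1) (by omega)⟩⟩
  invFun x := ⟨Fin.cons Γ x.2.1,
    @Fin.cons_zero (n + 1) (fun _ => ZMod k × List Step) Γ x.2.1, by
    intro j hj
    match j, hj with
    | 0, hj =>
      have h00 : (⟨0, by omega⟩ : Fin (n + 2)) = 0 := by apply Fin.ext; simp
      have h01 : (⟨1, hj⟩ : Fin (n + 2)) = Fin.succ 0 := by apply Fin.ext; simp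
      rw [h00, h01, @Fin.cons_zero (n + 1) (fun _ => ZMod k × List Step) Γ x.2.1,
        @Fin.cons_succ (n + 1) (fun _ => ZMod k × List Step) Γ x.2.1 0, x.2.2.1]
      exact x.1.2
    | (j + 1), hj =>
      have ha : (⟨j + 1, by omega⟩ : Fin (n + 2)) = Fin.succ ⟨j, by omega⟩ := by
        apply Fin.ext; simp
      have hb : (⟨j + 2, hj⟩ : Fin (n + 2)) = Fin.succ ⟨j + 1, by omega⟩ := by
        apply Fin.ext; simp
      rw [ha, hb, @Fin.cons_succ (n + 1) (fun _ => ZMod k × List Step) Γ x.2.1,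
        @Fin.cons_succ (n + 1) (fun _ => ZMod k × List Step) Γ x.2.1]
      exact x.2.2.2 j (by omega)⟩
  left_inv f := by
    apply Subtype.ext
    funext i
    refine Fin.cases ?_ ?_ i
    · exact (@Fin.cons_zero (n + 1) (fun _ => ZMod k × List Step) Γ
        (fun i => f.1 i.succ)).trans f.2.1.symm
    · intro i
      exact @Fin.cons_succ (n + 1) (fun _ => ZMod k × List Step) Γ
        (fun i => f.1 i.succ) i
  right_inv x := by
    obtain ⟨⟨Γ', hv⟩, g⟩ := x
    have h1 : (Fin.cons Γ g.1 : Fin (n + 2) → _) (Fin.succ 0) = Γ' :=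
      (@Fin.cons_succ (n + 1) (fun _ => ZMod k × List Step) Γ g.1 0).trans g.2.1
    refine Sigma.ext (Subtype.ext h1) (seqset_heq h1 _ _ ?_)
    funext i
    exact @Fin.cons_succ (n + 1) (fun _ => ZMod k × List Step) Γ g.1 i

lemma seqSet_card (k : ℕ) : ∀ n (Γ : ZMod k × List Step), Γ.2.length + 1 = k →
    Γ.2.count Step.down = n → Nonempty (SeqSet k n Γ ≃ Fin n.factorial) := by
  intro n
  induction n with
  | zero =>
    intro Γ _ _
    exact ⟨(Equiv.ofUnique _ (Fin 1)).trans (finCongr Nat.factorial_zero.symm)⟩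
  | succ n ih =>
    intro Γ hl hc
    obtain ⟨eV⟩ := valid_equiv_downs k Γ hl
    rw [hc] at eV
    have fib : ∀ Γ' : {x // Valid k Γ x},
        Nonempty (SeqSet k n Γ'.1 ≃ Fin n.factorial) := fun Γ' => by
      obtain ⟨hl', hc'⟩ := valid_step hl Γ'.2
      exact ih Γ'.1 hl' (by omega)
    refine ⟨((seqSuccEquiv k n Γ).trans
      (Equiv.sigmaCongrRight fun Γ' => (fib Γ').some)).trans ?_⟩
    refine (Equiv.sigmaEquivProd _ _).trans ?_
    refine (Equiv.prodCongr eV (Equiv.refl _)).trans ?_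
    exact (finProdFinEquiv).trans (finCongr (Nat.factorial_succ n).symm)


lemma seq_lengths {k n : ℕ} {Γ₀ : ZMod k × List Step} (hl : Γ₀.2.length + 1 = k)
    (f : SeqSet k n Γ₀) : ∀ (j : ℕ) (hj : j < n + 1), (f.1 ⟨j, hj⟩).2.length + 1 = k := by
  intro j
  induction j with
  | zero =>
    intro hj
    have h0 : (⟨0, hj⟩ : Fin (n + 1)) = 0 := by apply Fin.ext; simp
    rw [h0, f.2.1]
    exact hl
  | succ i ih =>
    intro hj
    exact (valid_step (ih (by omega)) (f.2.2 i hj)).1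

/-- The number of sequences `(Γ₁, …, Γ_k)` of abstract `G`-stairs
(encoded as pairs `(ℓ, w) ∈ ℤ/kℤ × {right,down}^{k-1}`) such that `Γ₁` has height `k`
(its step word consists only of down steps) and each `Γ_{j+1}` is the `G`-substair at some
position `m ∈ {1, …, k}` with horizontal left cut of the decreasing linking stair of `Γ_j`,
is exactly `k!`.  (These sequences are the ordered lists of toric `G`-constellations of the
chambers `C ⊂ Θ^gen`; hence there are `k!` chambers.) -/
theorem stmt6 (k : ℕ) (hk : 1 ≤ k) :
    Nat.card {Γ : Fin k → ZMod k × List Step //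
      (∀ j, (Γ j).2.length = k - 1) ∧
      (Γ ⟨0, hk⟩).2 = List.replicate (k - 1) Step.down ∧
      (∀ j : ℕ, ∀ hj : j + 1 < k,
        ∃ m : ℕ, 1 ≤ m ∧ m ≤ k ∧
          (dls (Γ ⟨j, Nat.lt_of_succ_lt hj⟩).2)[m - 1]? = some Step.down ∧
          Γ ⟨j + 1, hj⟩ = substairAt k (Γ ⟨j, Nat.lt_of_succ_lt hj⟩) m)} =
    Nat.factorial k := by
  obtain ⟨n, rfl⟩ : ∃ n, k = n + 1 := ⟨k - 1, by omega⟩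
  have E : {Γ : Fin (n + 1) → ZMod (n + 1) × List Step //
      (∀ j, (Γ j).2.length = n + 1 - 1) ∧
      (Γ ⟨0, hk⟩).2 = List.replicate (n + 1 - 1) Step.down ∧
      (∀ j : ℕ, ∀ hj : j + 1 < n + 1,
        ∃ m : ℕ, 1 ≤ m ∧ m ≤ n + 1 ∧
          (dls (Γ ⟨j, Nat.lt_of_succ_lt hj⟩).2)[m - 1]? = some Step.down ∧
          Γ ⟨j + 1, hj⟩ = substairAt (n + 1) (Γ ⟨j, Nat.lt_of_succ_lt hj⟩) m)} ≃
      Σ ℓ : ZMod (n + 1), SeqSet (n + 1) n (ℓ, List.replicate n Step.down) := {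
    toFun := fun Γ => ⟨(Γ.1 0).1, ⟨Γ.1, by
        have h2 := Γ.2.2.1
        have h0 : (⟨0, hk⟩ : Fin (n + 1)) = 0 := by apply Fin.ext; simp
        simp only [h0] at h2
        simp only [Nat.add_sub_cancel] at h2
        exact Prod.ext rfl h2,
      Γ.2.2.2⟩⟩
    invFun := fun x => ⟨x.2.1, by
      have hl' : ((x.1, List.replicate n Step.down) : ZMod (n + 1) × List Step).2.length + 1
          = n + 1 := by simp
      refine ⟨fun j => ?_, ?_, x.2.2.2⟩
      · have := seq_lengths hl' x.2 j.1 j.2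
        rw [Fin.eta] at this
        omega
      · have h0 : (⟨0, hk⟩ : Fin (n + 1)) = 0 := by apply Fin.ext; simp
        rw [h0, x.2.2.1]
        simp⟩
    left_inv := fun Γ => Subtype.ext rfl
    right_inv := fun x => by
      obtain ⟨ℓ, g⟩ := x
      have h1 : (((g.1 0).1, List.replicate n Step.down) : ZMod (n + 1) × List Step)
          = (ℓ, List.replicate n Step.down) := by rw [g.2.1]
      refine Sigma.ext (congrArg Prod.fst h1) (seqset_heq h1 _ _ rfl) }
  have e2 : (Σ ℓ : ZMod (n + 1), SeqSet (n + 1) n (ℓ, List.replicate n Step.down)) ≃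
      ZMod (n + 1) × Fin (n.factorial) :=
    (Equiv.sigmaCongrRight fun ℓ =>
      (seqSet_card (n + 1) n (ℓ, List.replicate n Step.down) (by simp) (by simp)).some).trans
    (Equiv.sigmaEquivProd _ _)
  rw [Nat.card_congr (E.trans e2), Nat.card_prod, Nat.card_zmod, Nat.card_eq_fintype_card,
    Fintype.card_fin, Nat.factorial_succ]
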